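/- Suppose a : ℕ → ℝ is an increasing sequence with a(n) → ∞, k and the resolvent r are summable, and x is the solution of the Volterra summation equation. Then: (a) Λ_a|x| = 0 if and only if Λ_a|H| = 0; (b) Λ_a|x| ∈ (0,∞) if and only if Λ_a|H| ∈ (0,∞); (c) Λ_a|x| = +∞ if and only if Λ_a|H| = +∞. -/

import Mathlib

open Filter Finset

/-- `r` is the resolvent of the kernel `k`:
`r(0) = 1` and `r(n+1) = Σ_{j=0}^n k(n−j) r(j)`. -/
def IsResolvent (k r : ℕ → ℝ) : Prop :=
  r 0 = 1 ∧ ∀ n : ℕ, r (n + 1) = ∑ j ∈ Finset.range (n + 1), k (n - j) * r j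

/-- `x` solves the Volterra summation equation
`x(n+1) = Σ_{j=0}^n k(n−j) x(j) + H(n+1)`. -/
def IsVolterraSol (k H x : ℕ → ℝ) : Prop :=
  ∀ n : ℕ, x (n + 1) = (∑ j ∈ Finset.range (n + 1), k (n - j) * x j) + H (n + 1)

/-- `Λ_a|y| = limsup_{n→∞} |y(n)|/a(n)`, computed in the extended reals. -/
noncomputable def Lam (a y : ℕ → ℝ) : EReal :=
  Filter.limsup (fun n => ((|y n| / a n : ℝ) : EReal)) atTop

noncomputable def convS (c z : ℕ → ℝ) (n : ℕ) : ℝ :=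
  ∑ j ∈ Finset.range (n + 1), c (n - j) * z j

lemma M_nonneg {a z : ℕ → ℝ} (ha' : Tendsto a atTop atTop) {M : ℝ}
    (hz : ∀ᶠ n in atTop, |z n| ≤ M * a n) : 0 ≤ M := by
  obtain ⟨n, h1, h2⟩ := (hz.and (ha'.eventually_gt_atTop 0)).exists
  nlinarith [abs_nonneg (z n)]

lemma conv_bdd {a : ℕ → ℝ} (ha : StrictMono a) (ha' : Tendsto a atTop atTop)
    (c z : ℕ → ℝ) (hc : Summable fun j => |c j|) {M : ℝ}
    (hz : ∀ᶠ n in atTop, |z n| ≤ M * a n) {ε : ℝ} (hε : 0 < ε) :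
    ∀ᶠ n in atTop, |convS c z n| ≤ ((∑' j, |c j|) * M + ε) * a n := by
  set S := ∑' j, |c j| with hSdef
  have hM0 : 0 ≤ M := M_nonneg ha' hz
  have hcb : ∀ m, |c m| ≤ S := fun m => Summable.le_tsum hc m (fun _ _ => abs_nonneg _)
  obtain ⟨N, hN⟩ := eventually_atTop.mp hz
  set B : ℝ := ∑ j ∈ Finset.range N, S * |z j| with hBdef
  have hBε : ∀ᶠ n in atTop, B ≤ ε * a n := by
    filter_upwards [ha'.eventually_ge_atTop (B / ε)] with n hn
    calc B = (B / ε) * ε := by field_simp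
    _ ≤ a n * ε := by nlinarith
    _ = ε * a n := by ring
  filter_upwards [hBε, eventually_ge_atTop N, ha'.eventually_gt_atTop 0]
    with n hB hnN hapos
  have habs : |convS c z n| ≤ ∑ j ∈ Finset.range (n+1), |c (n - j)| * |z j| := by
    refine (Finset.abs_sum_le_sum_abs _ _).trans ?_
    exact le_of_eq (Finset.sum_congr rfl fun j _ => abs_mul _ _)
  have hsplit : ∑ j ∈ Finset.range (n+1), |c (n - j)| * |z j|
      = (∑ j ∈ Finset.range N, |c (n - j)| * |z j|)
        + ∑ j ∈ Finset.Ico N (n+1), |c (n - j)| * |z j| := by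
    rw [Finset.range_eq_Ico, ← Finset.sum_Ico_consecutive _ (Nat.zero_le N) (by omega),
      ← Finset.range_eq_Ico]
  have h1 : ∑ j ∈ Finset.range N, |c (n - j)| * |z j| ≤ B := by
    refine Finset.sum_le_sum fun j _ => ?_
    exact mul_le_mul_of_nonneg_right (hcb _) (abs_nonneg _)
  have h2 : ∑ j ∈ Finset.Ico N (n+1), |c (n - j)| * |z j| ≤ S * (M * a n) := by
    have step : ∑ j ∈ Finset.Ico N (n+1), |c (n - j)| * |z j|
        ≤ ∑ j ∈ Finset.Ico N (n+1), |c (n - j)| * (M * a n) := by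
      refine Finset.sum_le_sum fun j hj => ?_
      obtain ⟨hj1, hj2⟩ := Finset.mem_Ico.mp hj
      have : |z j| ≤ M * a j := hN j hj1
      have haj : a j ≤ a n := (ha.monotone (by omega))
      exact mul_le_mul_of_nonneg_left
        (this.trans (mul_le_mul_of_nonneg_left haj hM0)) (abs_nonneg _)
    rw [← Finset.sum_mul] at step
    refine step.trans ?_
    have hsum : ∑ j ∈ Finset.Ico N (n+1), |c (n - j)| ≤ S := by
      have hsub : ∑ j ∈ Finset.Ico N (n+1), |c (n - j)|
          ≤ ∑ j ∈ Finset.range (n+1), |c (n - j)| := by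
        refine Finset.sum_le_sum_of_subset_of_nonneg ?_ (fun _ _ _ => abs_nonneg _)
        rw [Finset.range_eq_Ico]
        exact Finset.Ico_subset_Ico (Nat.zero_le N) le_rfl
      have hrefl : ∑ j ∈ Finset.range (n+1), |c (n - j)|
          = ∑ j ∈ Finset.range (n+1), |c j| := by
        have := Finset.sum_range_reflect (fun j => |c j|) (n+1)
        simpa using this
      rw [hrefl] at hsub
      exact hsub.trans (Summable.sum_le_tsum _ (fun _ _ => abs_nonneg _) hc)
    nlinarith [mul_nonneg hM0 hapos.le]
  calc |convS c z n| ≤ B + S * (M * a n) := by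
        rw [hsplit] at habs; linarith
  _ ≤ ε * a n + S * (M * a n) := by linarith
  _ = (S * M + ε) * a n := by ring

lemma lam_nonneg {a : ℕ → ℝ} (ha' : Tendsto a atTop atTop) (y : ℕ → ℝ) :
    0 ≤ Lam a y := by
  refine le_limsup_of_frequently_le ?_
  refine ((ha'.eventually_gt_atTop 0).mono fun n hn => ?_).frequently
  exact_mod_cast div_nonneg (abs_nonneg _) hn.le

lemma lam_le_of_bdd {a : ℕ → ℝ} (ha' : Tendsto a atTop atTop) {y : ℕ → ℝ} {C : ℝ}
    (h : ∀ᶠ n in atTop, |y n| ≤ C * a n) : Lam a y ≤ (C : ℝ) := by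
  refine limsup_le_of_le ?_ ?_
  · isBoundedDefault
  · filter_upwards [h, ha'.eventually_gt_atTop 0] with n h1 h2
    exact_mod_cast (div_le_iff₀ h2).mpr (by linarith)

lemma bdd_of_lam_lt {a : ℕ → ℝ} (ha' : Tendsto a atTop atTop) {y : ℕ → ℝ} {C : ℝ}
    (h : Lam a y < (C : ℝ)) : ∀ᶠ n in atTop, |y n| ≤ C * a n := by
  filter_upwards [eventually_lt_of_limsup_lt h, ha'.eventually_gt_atTop 0] with n h1 h2
  have : |y n| / a n < C := by exact_mod_cast h1
  nlinarith [(div_lt_iff₀ h2).mp this]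

lemma voc (k r H x : ℕ → ℝ) (ξ : ℝ) (hres : IsResolvent k r)
    (hx0 : x 0 = ξ) (hx : IsVolterraSol k H x) :
    ∀ n, x n = r n * (ξ - H 0) + convS r H n := by
  intro n
  induction n using Nat.strong_induction_on with
  | _ n ih =>
    match n with
    | 0 => simp [convS, hres.1, hx0]
    | Nat.succ n =>
      have key : ∀ j ∈ Finset.range (n+1), k (n - j) * x j
          = k (n-j) * r j * (ξ - H 0) + k (n-j) * convS r H j := by
        intro j hj
        rw [ih j (by simpa [Nat.lt_succ_iff] using Finset.mem_range.mp hj)]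
        ring
      rw [hx n, Finset.sum_congr rfl key, Finset.sum_add_distrib,
        ← Finset.sum_mul, ← hres.2 n]
      have hD : ∑ j ∈ Finset.range (n+1), k (n - j) * convS r H j
          = ∑ i ∈ Finset.range (n+1), r (n + 1 - i) * H i := by
        unfold convS
        have h1 : ∀ j ∈ Finset.range (n+1),
            k (n - j) * ∑ i ∈ Finset.range (j+1), r (j - i) * H i
            = ∑ i ∈ Finset.range (j+1), k (n - j) * (r (j - i) * H i) :=
          fun j _ => Finset.mul_sum _ _ _
        rw [Finset.sum_congr rfl h1]
        rw [Finset.sum_comm' (s' := fun i => Finset.Icc i n) (t' := Finset.range (n+1))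
          (fun x y => by simp only [Finset.mem_range, Finset.mem_Icc, Nat.lt_succ_iff]; omega)]
        refine Finset.sum_congr rfl fun i hi => ?_
        have hin : i ≤ n := by simpa [Nat.lt_succ_iff] using Finset.mem_range.mp hi
        have h2 : ∑ j ∈ Finset.Icc i n, k (n - j) * (r (j - i) * H i)
            = (∑ j ∈ Finset.Icc i n, k (n - j) * r (j - i)) * H i := by
          rw [Finset.sum_mul]; exact Finset.sum_congr rfl fun j _ => by ring
        rw [h2]
        congr 1
        have h3 : ∑ j ∈ Finset.Icc i n, k (n - j) * r (j - i)
            = ∑ m ∈ Finset.range (n - i + 1), k (n - i - m) * r m := by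
          rw [← Finset.Ico_add_one_right_eq_Icc, Finset.sum_Ico_eq_sum_range]
          have : n + 1 - i = n - i + 1 := by omega
          rw [this]
          refine Finset.sum_congr rfl fun m _ => ?_
          congr 2 <;> omega
        rw [h3, ← hres.2 (n - i)]
        congr 1
        omega
      rw [hD]
      have : convS r H (n+1)
          = (∑ i ∈ Finset.range (n+1), r (n + 1 - i) * H i) + r 0 * H (n+1) := by
        unfold convS
        rw [Finset.sum_range_succ]
        simp
      rw [this, hres.1]
      ring

theorem stmt7 (k r H x : ℕ → ℝ) (ξ : ℝ)
    (a : ℕ → ℝ) (ha : StrictMono a) (ha' : Tendsto a atTop atTop)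
    (hk : Summable fun j => |k j|)
    (hres : IsResolvent k r) (hrs : Summable fun j => |r j|)
    (hx0 : x 0 = ξ) (hx : IsVolterraSol k H x) :
    (Lam a x = 0 ↔ Lam a H = 0) ∧
    ((0 < Lam a x ∧ Lam a x < ⊤) ↔ (0 < Lam a H ∧ Lam a H < ⊤)) ∧
    (Lam a x = ⊤ ↔ Lam a H = ⊤) := by
  set Sk : ℝ := ∑' j, |k j| with hSkdef
  set Sr : ℝ := ∑' j, |r j| with hSrdef
  have hSk0 : 0 ≤ Sk := tsum_nonneg fun _ => abs_nonneg _
  have hSr0 : 0 ≤ Sr := tsum_nonneg fun _ => abs_nonneg _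
  have hvoc := voc k r H x ξ hres hx0 hx
  -- key1 : bound on x from bound on H
  have key1 : ∀ {M ε : ℝ}, 0 < ε → (∀ᶠ n in atTop, |H n| ≤ M * a n) →
      ∀ᶠ n in atTop, |x n| ≤ (Sr * M + ε) * a n := by
    intro M ε hε hH
    have hconv := conv_bdd ha ha' r H hrs hH (half_pos hε)
    set B : ℝ := Sr * |ξ - H 0| with hBdef
    have hB0 : 0 ≤ B := mul_nonneg hSr0 (abs_nonneg _)
    have hrb : ∀ m, |r m| ≤ Sr := fun m => Summable.le_tsum hrs m (fun _ _ => abs_nonneg _)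
    have hBε : ∀ᶠ n in atTop, B ≤ (ε / 2) * a n := by
      filter_upwards [ha'.eventually_ge_atTop (B / (ε / 2))] with n hn
      have hε2 : (0:ℝ) < ε / 2 := half_pos hε
      calc B = (B / (ε / 2)) * (ε / 2) := by field_simp
      _ ≤ a n * (ε / 2) := by nlinarith
      _ = (ε / 2) * a n := by ring
    filter_upwards [hconv, hBε] with n h1 h2
    calc |x n| = |r n * (ξ - H 0) + convS r H n| := by rw [← hvoc n]
    _ ≤ |r n * (ξ - H 0)| + |convS r H n| := abs_add_le _ _
    _ ≤ B + (Sr * M + ε / 2) * a n := by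
        refine add_le_add ?_ h1
        rw [abs_mul]
        exact mul_le_mul_of_nonneg_right (hrb n) (abs_nonneg _)
    _ ≤ (ε / 2) * a n + (Sr * M + ε / 2) * a n := by linarith
    _ = (Sr * M + ε) * a n := by ring
  -- key2 : bound on H from bound on x
  have key2 : ∀ {M ε : ℝ}, 0 < ε → (∀ᶠ n in atTop, |x n| ≤ M * a n) →
      ∀ᶠ n in atTop, |H n| ≤ ((1 + Sk) * M + ε) * a n := by
    intro M ε hε hXb
    have hM0 : 0 ≤ M := M_nonneg ha' hXb
    have hconv := conv_bdd ha ha' k x hk hXb hε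
    obtain ⟨N₁, h₁⟩ := eventually_atTop.mp hXb
    obtain ⟨N₂, h₂⟩ := eventually_atTop.mp hconv
    rw [eventually_atTop]
    refine ⟨N₁ + N₂ + 1, fun m hm => ?_⟩
    obtain ⟨n, rfl⟩ : ∃ n, m = n + 1 := ⟨m - 1, by omega⟩
    have hHn : H (n+1) = x (n+1) - convS k x n := by
      have := hx n
      unfold convS
      linarith [hx n]
    have han : a n ≤ a (n+1) := (ha (by omega)).le
    have hcoef : 0 ≤ Sk * M + ε := by positivity
    calc |H (n+1)| ≤ |x (n+1)| + |convS k x n| := by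
          rw [hHn]; exact abs_sub _ _
    _ ≤ M * a (n+1) + (Sk * M + ε) * a n := by
        refine add_le_add (h₁ _ (by omega)) (h₂ _ (by omega))
    _ ≤ M * a (n+1) + (Sk * M + ε) * a (n+1) := by nlinarith
    _ = ((1 + Sk) * M + ε) * a (n+1) := by ring
  -- finiteness transfer
  have nt1 : Lam a H ≠ ⊤ → Lam a x ≠ ⊤ := by
    intro h
    obtain ⟨C, hC1, -⟩ := EReal.lt_iff_exists_real_btwn.mp h.lt_top
    have := lam_le_of_bdd ha' (key1 one_pos (bdd_of_lam_lt ha' hC1))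
    exact (this.trans_lt (EReal.coe_lt_top _)).ne
  have nt2 : Lam a x ≠ ⊤ → Lam a H ≠ ⊤ := by
    intro h
    obtain ⟨C, hC1, -⟩ := EReal.lt_iff_exists_real_btwn.mp h.lt_top
    have := lam_le_of_bdd ha' (key2 one_pos (bdd_of_lam_lt ha' hC1))
    exact (this.trans_lt (EReal.coe_lt_top _)).ne
  -- zero transfer
  have z1 : Lam a H = 0 → Lam a x = 0 := by
    intro h0
    refine le_antisymm ?_ (lam_nonneg ha' x)
    by_contra hne
    obtain ⟨c, hc1, hc2⟩ := EReal.lt_iff_exists_real_btwn.mp (not_le.mp hne)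
    have hcpos : (0:ℝ) < c := by exact_mod_cast hc1
    have hδ : (0:ℝ) < c / (Sr + 1) := by positivity
    have hHb : ∀ᶠ n in atTop, |H n| ≤ (c / (Sr + 1)) * a n := by
      refine bdd_of_lam_lt ha' ?_
      rw [h0]; exact_mod_cast hδ
    have hxb := key1 hδ hHb
    have heq : Sr * (c / (Sr + 1)) + c / (Sr + 1) = c := by field_simp
    rw [heq] at hxb
    exact absurd (lam_le_of_bdd ha' hxb) (not_le.mpr hc2)
  have z2 : Lam a x = 0 → Lam a H = 0 := by
    intro h0
    refine le_antisymm ?_ (lam_nonneg ha' H)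
    by_contra hne
    obtain ⟨c, hc1, hc2⟩ := EReal.lt_iff_exists_real_btwn.mp (not_le.mp hne)
    have hcpos : (0:ℝ) < c := by exact_mod_cast hc1
    have hδ : (0:ℝ) < c / (Sk + 2) := by positivity
    have hXb : ∀ᶠ n in atTop, |x n| ≤ (c / (Sk + 2)) * a n := by
      refine bdd_of_lam_lt ha' ?_
      rw [h0]; exact_mod_cast hδ
    have hHb := key2 hδ hXb
    have heq : (1 + Sk) * (c / (Sk + 2)) + c / (Sk + 2) = c := by field_simp; ring
    rw [heq] at hHb
    exact absurd (lam_le_of_bdd ha' hHb) (not_le.mpr hc2)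
  have e0 : (Lam a x = 0 ↔ Lam a H = 0) := ⟨z2, z1⟩
  have et : (Lam a x = ⊤ ↔ Lam a H = ⊤) :=
    ⟨fun h => by_contra fun hn => nt1 hn h, fun h => by_contra fun hn => nt2 hn h⟩
  refine ⟨e0, ?_, et⟩
  have hx0' : 0 < Lam a x ↔ Lam a x ≠ 0 :=
    ⟨fun h => h.ne', fun h => (lam_nonneg ha' x).lt_of_ne (Ne.symm h)⟩
  have hH0' : 0 < Lam a H ↔ Lam a H ≠ 0 :=
    ⟨fun h => h.ne', fun h => (lam_nonneg ha' H).lt_of_ne (Ne.symm h)⟩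
  rw [hx0', hH0', lt_top_iff_ne_top, lt_top_iff_ne_top]
  exact and_congr e0.not et.not
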